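/- Let 0 < Y < 2 and define J_Y(λ) = √(λ/(2π)) ∫_0^∞ e^{−λh/2} h^{(Y−1)/2} (1+h)^{−Y/2} dh for λ > 0. Then lim_{λ→0⁺} (1 − J_Y(λ))/√λ = √2 · Γ((Y+1)/2)/Γ(Y/2). (The order of convergence of 1 − J_Y(λ) to zero is exactly √λ.) -/

import Mathlib

open MeasureTheory Real Set Filter

open Topology

/-- `J_Y(λ) = √(λ/(2π)) ∫_0^∞ e^{-λh/2} h^{(Y-1)/2} (1+h)^{-Y/2} dh`. -/
noncomputable def JFun (Y l : ℝ) : ℝ :=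
  Real.sqrt (l / (2 * π)) *
    ∫ h in Ioi (0:ℝ), Real.exp (-(l * h / 2)) * h ^ ((Y-1)/2) * (1+h) ^ (-(Y/2))


-- ratio identity
lemma ratio_id {x : ℝ} (hx : 0 < x) (c p : ℝ) :
    x ^ (c + p) * (1+x) ^ (-p) = x ^ c * (x/(1+x)) ^ p := by
  have h1 : (0:ℝ) < 1 + x := by linarith
  rw [Real.div_rpow hx.le h1.le, Real.rpow_add hx, Real.rpow_neg h1.le, div_eq_mul_inv]
  ring

lemma ratio_le_one {x : ℝ} (hx : 0 < x) {p : ℝ} (hp : 0 ≤ p) : (x/(1+x)) ^ p ≤ 1 :=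
  Real.rpow_le_one (by positivity) ((div_le_one (by linarith)).mpr (by linarith)) hp

lemma ratio_ge {x : ℝ} (hx : 0 < x) {p : ℝ} (hp1 : p ≤ 1) : x/(1+x) ≤ (x/(1+x)) ^ p := by
  have h1 : (0:ℝ) < 1 + x := by linarith
  have := Real.rpow_le_rpow_of_exponent_ge (div_pos hx h1)
    ((div_le_one h1).mpr (by linarith)) hp1 (y := 1)
  rwa [Real.rpow_one] at this

/-- splitting criterion for integrability on `Ioi 0` -/
lemma integrableOn_split {f : ℝ → ℝ} {c d : ℝ} (hm : ContinuousOn f (Ioi 0)) (hc : -1 < c) (hd : d < -1)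
    (h01 : ∀ x ∈ Ioc (0:ℝ) 1, ‖f x‖ ≤ x ^ c) (h1 : ∀ x ∈ Ioi (1:ℝ), ‖f x‖ ≤ x ^ d) :
    IntegrableOn f (Ioi (0:ℝ)) := by
  have hu : Ioc (0:ℝ) 1 ∪ Ioi 1 = Ioi 0 := Ioc_union_Ioi_eq_Ioi zero_le_one
  rw [← hu]
  apply IntegrableOn.union
  · have i1 : IntegrableOn (fun x : ℝ => x ^ c) (Ioc (0:ℝ) 1) := by
      have := intervalIntegral.intervalIntegrable_rpow' (show (-1:ℝ) < c from hc)
        (a := 0) (b := 1)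
      rwa [intervalIntegrable_iff_integrableOn_Ioc_of_le zero_le_one] at this
    exact i1.mono' ((hm.mono Ioc_subset_Ioi_self).aestronglyMeasurable measurableSet_Ioc)
      ((ae_restrict_iff' measurableSet_Ioc).mpr (ae_of_all _ h01))
  · exact (integrableOn_Ioi_rpow_of_lt hd one_pos).mono'
      ((hm.mono (Ioi_subset_Ioi zero_le_one)).aestronglyMeasurable measurableSet_Ioi)
      ((ae_restrict_iff' measurableSet_Ioi).mpr (ae_of_all _ h1))

lemma beta_Ioo (a b : ℝ) (ha : 0 < a) (hb : 0 < b) :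
    ∫ x in Ioo (0:ℝ) 1, x ^ (a-1) * (1-x) ^ (b-1) =
      Real.Gamma a * Real.Gamma b / Real.Gamma (a+b) := by
  have key : Complex.betaIntegral a b =
      ((∫ x in Ioo (0:ℝ) 1, x ^ (a-1) * (1-x) ^ (b-1) : ℝ) : ℂ) := by
    unfold Complex.betaIntegral
    rw [intervalIntegral.integral_of_le zero_le_one, integral_Ioc_eq_integral_Ioo]
    have step : ∫ (t : ℝ) in Ioo (0:ℝ) 1, (t:ℂ) ^ ((a:ℂ) - 1) * (1 - (t:ℂ)) ^ ((b:ℂ) - 1)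
        = ∫ (t : ℝ) in Ioo (0:ℝ) 1, ((t ^ (a-1) * (1-t) ^ (b-1) : ℝ) : ℂ) := by
      refine setIntegral_congr_fun measurableSet_Ioo (fun x hx => ?_)
      have h1 : (0:ℝ) ≤ x := hx.1.le
      have h2 : (0:ℝ) ≤ 1 - x := by linarith [hx.2]
      push_cast
      rw [Complex.ofReal_cpow h1, Complex.ofReal_cpow h2]
      push_cast
      ring
    rw [step]
    exact integral_ofReal
  have hg : Complex.Gamma a * Complex.Gamma b
      = Complex.Gamma (a+b) * Complex.betaIntegral a b :=
    Complex.Gamma_mul_Gamma_eq_betaIntegral (by simpa using ha) (by simpa using hb)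
  rw [key] at hg
  rw [← Complex.ofReal_add, Complex.Gamma_ofReal, Complex.Gamma_ofReal,
    Complex.Gamma_ofReal, ← Complex.ofReal_mul, ← Complex.ofReal_mul] at hg
  have h3 : Real.Gamma a * Real.Gamma b
      = Real.Gamma (a+b) * ∫ x in Ioo (0:ℝ) 1, x ^ (a-1) * (1-x) ^ (b-1) :=
    Complex.ofReal_injective hg
  have h4 : Real.Gamma (a+b) ≠ 0 := (Real.Gamma_pos_of_pos (by linarith)).ne'
  rw [eq_div_iff h4, mul_comm _ (Real.Gamma (a+b)), ← h3]

lemma beta_Ioi (a b : ℝ) (ha : 0 < a) (hb : 0 < b) :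
    ∫ x in Ioi (0:ℝ), x ^ (a-1) * (1+x) ^ (-(a+b)) =
      Real.Gamma a * Real.Gamma b / Real.Gamma (a+b) := by
  have himg : (fun x : ℝ => x/(1+x)) '' (Ioi 0) = Ioo (0:ℝ) 1 := by
    ext y
    simp only [mem_image, mem_Ioi, mem_Ioo]
    constructor
    · rintro ⟨x, hx, rfl⟩
      have h1 : (0:ℝ) < 1 + x := by linarith
      exact ⟨div_pos hx h1, (div_lt_one h1).mpr (by linarith)⟩
    · rintro ⟨hy0, hy1⟩
      refine ⟨y/(1-y), div_pos hy0 (by linarith), ?_⟩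
      have h1 : (1:ℝ) - y ≠ 0 := by linarith
      field_simp
      ring
  have hder : ∀ x ∈ Ioi (0:ℝ),
      HasDerivWithinAt (fun x : ℝ => x/(1+x)) (((1+x)^2)⁻¹) (Ioi 0) x := by
    intro x hx
    have h1 : (1:ℝ) + x ≠ 0 := by have := mem_Ioi.mp hx; positivity
    have h0 := (hasDerivAt_id x).div ((hasDerivAt_id x).const_add 1) h1
    simp only [id] at h0
    have h2 : (1 * (1 + x) - x * 1) / (1 + x)^2 = ((1+x)^2)⁻¹ := by
      field_simp
      ring
    rw [h2] at h0
    exact h0.hasDerivWithinAt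
  have hinj : InjOn (fun x : ℝ => x/(1+x)) (Ioi 0) := by
    intro x hx y hy hxy
    have h1 : (1:ℝ) + x ≠ 0 := by have := mem_Ioi.mp hx; positivity
    have h2 : (1:ℝ) + y ≠ 0 := by have := mem_Ioi.mp hy; positivity
    field_simp at hxy
    nlinarith [hxy]
  have key := integral_image_eq_integral_abs_deriv_smul measurableSet_Ioi hder hinj
    (fun t => t ^ (a-1) * (1-t) ^ (b-1))
  rw [himg, beta_Ioo a b ha hb] at key
  rw [key]
  clear key
  refine setIntegral_congr_fun measurableSet_Ioi (fun x hx => ?_)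
  show _ = |((1 + x) ^ 2)⁻¹| • ((x / (1 + x)) ^ (a - 1) * (1 - x / (1 + x)) ^ (b - 1))
  have hx0 : (0:ℝ) < x := mem_Ioi.mp hx
  have h1 : (0:ℝ) < 1 + x := by linarith
  have e2 : 1 - x/(1+x) = (1+x)⁻¹ := by field_simp; ring
  simp only [smul_eq_mul]
  rw [abs_of_pos (by positivity), e2, Real.div_rpow hx0.le h1.le,
    Real.inv_rpow h1.le, Real.rpow_neg h1.le]
  have e3 : ((1:ℝ)+x) ^ (a+b) = (1+x)^2 * (1+x) ^ (a-1) * (1+x) ^ (b-1) := by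
    rw [show a+b = ((2:ℕ):ℝ) + (a-1) + (b-1) by push_cast; ring,
      Real.rpow_add h1, Real.rpow_add h1, Real.rpow_natCast]
  rw [e3]
  have p1 : (0:ℝ) < (1+x) ^ (a-1) := Real.rpow_pos_of_pos h1 _
  have p2 : (0:ℝ) < (1+x) ^ (b-1) := Real.rpow_pos_of_pos h1 _
  field_simp

noncomputable def Gfun (Y : ℝ) : ℝ → ℝ :=
  fun h => h ^ (-(1/2) : ℝ) - h ^ ((Y-1)/2) * (1+h) ^ (-(Y/2))

variable {Y : ℝ}

lemma G_id {x : ℝ} (hx : 0 < x) :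
    x ^ ((Y-1)/2) * (1+x) ^ (-(Y/2)) = x ^ (-(1/2):ℝ) * (x/(1+x)) ^ (Y/2) := by
  have := ratio_id hx (-(1/2)) (Y/2)
  rwa [show -(1/2) + Y/2 = (Y-1)/2 by ring] at this

lemma G_nonneg (hY0 : 0 < Y) {x : ℝ} (hx : 0 < x) : 0 ≤ Gfun Y x := by
  have h2 : x ^ ((Y-1)/2) * (1+x) ^ (-(Y/2)) ≤ x ^ (-(1/2):ℝ) := by
    rw [G_id hx]
    exact mul_le_of_le_one_right (Real.rpow_nonneg hx.le _) (ratio_le_one hx (by linarith))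
  simp only [Gfun]; linarith

lemma G_le (hY0 : 0 < Y) (hY2 : Y ≤ 2) {x : ℝ} (hx : 0 < x) :
    Gfun Y x ≤ x ^ (-(1/2):ℝ) * (1+x)⁻¹ := by
  have h1 : (0:ℝ) < 1 + x := by linarith
  have h2 : x ^ (-(1/2):ℝ) * (x/(1+x)) ≤ x ^ ((Y-1)/2) * (1+x) ^ (-(Y/2)) := by
    rw [G_id hx]
    exact mul_le_mul_of_nonneg_left (ratio_ge hx (by linarith)) (Real.rpow_nonneg hx.le _)
  have h3 : x ^ (-(1/2):ℝ) * (x/(1+x)) = x ^ (-(1/2):ℝ) - x ^ (-(1/2):ℝ) * (1+x)⁻¹ := by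
    field_simp
    ring
  simp only [Gfun]
  linarith

lemma intD : IntegrableOn (fun x : ℝ => x ^ (-(1/2):ℝ) * (1+x)⁻¹) (Ioi (0:ℝ)) := by
  apply integrableOn_split (c := -(1/2)) (d := -(3/2))
  · exact (continuousOn_id.rpow_const (fun x hx => Or.inl (ne_of_gt hx))).mul
      (((continuous_const.add continuous_id).continuousOn).inv₀
        (fun x hx => by have : (0:ℝ) < x := hx; show (1:ℝ) + x ≠ 0; positivity))
  · norm_num
  · norm_num
  · intro x hx
    have hx0 : (0:ℝ) < x := hx.1
    have h1 : (0:ℝ) < 1 + x := by linarith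
    rw [Real.norm_eq_abs, abs_of_nonneg (by positivity)]
    have : (1+x)⁻¹ ≤ 1 := by
      rw [inv_le_one_iff₀]; right; linarith
    nlinarith [Real.rpow_nonneg hx0.le (-(1/2):ℝ), Real.rpow_pos_of_pos hx0 (-(1/2):ℝ)]
  · intro x hx
    have hx1 : (1:ℝ) < x := hx
    have hx0 : (0:ℝ) < x := by linarith
    have h1 : (0:ℝ) < 1 + x := by linarith
    rw [Real.norm_eq_abs, abs_of_nonneg (by positivity)]
    have e : x ^ (-(3/2):ℝ) = x ^ (-(1/2):ℝ) * x⁻¹ := by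
      rw [show (-(3/2):ℝ) = -(1/2) + (-1) by norm_num, Real.rpow_add hx0,
        Real.rpow_neg_one]
    rw [e]
    exact mul_le_mul_of_nonneg_left (by
      rw [inv_le_inv₀ h1 hx0]; linarith) (Real.rpow_nonneg hx0.le _)

lemma contG : ContinuousOn (Gfun Y) (Ioi (0:ℝ)) := by
  apply ContinuousOn.sub
  · exact continuousOn_id.rpow_const (fun x hx => Or.inl (ne_of_gt hx))
  · exact (continuousOn_id.rpow_const (fun x hx => Or.inl (ne_of_gt hx))).mul
      (((continuous_const.add continuous_id).continuousOn).rpow_const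
        (fun x hx => Or.inl (by have : (0:ℝ) < x := hx; show (1:ℝ) + x ≠ 0; positivity)))

lemma intG (hY0 : 0 < Y) (hY2 : Y ≤ 2) : IntegrableOn (Gfun Y) (Ioi (0:ℝ)) := by
  apply intD.mono' (contG.aestronglyMeasurable measurableSet_Ioi)
  refine (ae_restrict_iff' measurableSet_Ioi).mpr (ae_of_all _ (fun x hx => ?_))
  have hx0 : (0:ℝ) < x := hx
  rw [Real.norm_eq_abs, abs_of_nonneg (G_nonneg hY0 hx0)]
  exact G_le hY0 hY2 hx0

lemma intBet (hY0 : 0 < Y) : IntegrableOn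
    (fun x : ℝ => x ^ ((Y-1)/2) * (1+x) ^ (-(Y/2)-1)) (Ioi (0:ℝ)) := by
  apply integrableOn_split (c := (Y-1)/2) (d := -(3/2))
  · exact (continuousOn_id.rpow_const (fun x hx => Or.inl (ne_of_gt hx))).mul
      (((continuous_const.add continuous_id).continuousOn).rpow_const
        (fun x hx => Or.inl (by have : (0:ℝ) < x := hx; show (1:ℝ) + x ≠ 0; positivity)))
  · linarith
  · norm_num
  · intro x hx
    have hx0 : (0:ℝ) < x := hx.1
    have h1 : (0:ℝ) < 1 + x := by linarith
    rw [Real.norm_eq_abs, abs_of_nonneg (by positivity)]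
    have h2 : (1+x) ^ (-(Y/2)-1) ≤ 1 :=
      Real.rpow_le_one_of_one_le_of_nonpos (by linarith) (by linarith)
    nlinarith [Real.rpow_nonneg hx0.le ((Y-1)/2), Real.rpow_pos_of_pos hx0 ((Y-1)/2),
      Real.rpow_nonneg h1.le (-(Y/2)-1)]
  · intro x hx
    have hx1 : (1:ℝ) < x := hx
    have hx0 : (0:ℝ) < x := by linarith
    rw [Real.norm_eq_abs, abs_of_nonneg (by positivity)]
    have h2 : (1+x) ^ (-(Y/2)-1) ≤ x ^ (-(Y/2)-1) :=
      Real.rpow_le_rpow_of_nonpos hx0 (by linarith) (by linarith)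
    calc x ^ ((Y-1)/2) * (1+x) ^ (-(Y/2)-1) ≤ x ^ ((Y-1)/2) * x ^ (-(Y/2)-1) :=
          mul_le_mul_of_nonneg_left h2 (Real.rpow_nonneg hx0.le _)
      _ = x ^ (-(3/2):ℝ) := by
          rw [← Real.rpow_add hx0]; congr 1; ring



variable {Y : ℝ}

lemma L1 {l : ℝ} (hl : 0 < l) :
    ∫ h in Ioi (0:ℝ), Real.exp (-(l*h/2)) * h ^ (-(1/2):ℝ) = Real.sqrt (2*π/l) := by
  have base := integral_rpow_mul_exp_neg_mul_Ioi (a := (1:ℝ)/2) (r := l/2)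
    (by norm_num) (by positivity)
  have e : (fun h : ℝ => Real.exp (-(l*h/2)) * h ^ (-(1/2):ℝ))
      = fun t : ℝ => t ^ ((1:ℝ)/2 - 1) * Real.exp (-(l/2*t)) := by
    funext t
    rw [show ((1:ℝ)/2 - 1) = -(1/2) by norm_num, show -(l*t/2) = -(l/2*t) by ring]
    ring
  rw [e, base, Real.Gamma_one_half_eq, ← Real.sqrt_eq_rpow,
    ← Real.sqrt_mul (by positivity)]
  congr 1
  field_simp

lemma intA {l : ℝ} (hl : 0 < l) :
    IntegrableOn (fun h : ℝ => Real.exp (-(l*h/2)) * h ^ (-(1/2):ℝ)) (Ioi (0:ℝ)) := by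
  have base : IntegrableOn (fun x : ℝ => x ^ (-(1/2):ℝ) * Real.exp (-(l/2) * x ^ (1:ℝ)))
      (Ioi (0:ℝ)) :=
    integrableOn_rpow_mul_exp_neg_mul_rpow (by norm_num) one_pos (by positivity)
  have e : (fun h : ℝ => Real.exp (-(l*h/2)) * h ^ (-(1/2):ℝ))
      = fun x : ℝ => x ^ (-(1/2):ℝ) * Real.exp (-(l/2) * x ^ (1:ℝ)) := by
    funext x
    rw [Real.rpow_one, show -(l/2) * x = -(l*x/2) by ring]
    ring
  rw [e]
  exact base

lemma intB (hY0 : 0 < Y) {l : ℝ} (hl : 0 < l) :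
    IntegrableOn (fun h : ℝ => Real.exp (-(l*h/2)) * h ^ ((Y-1)/2) * (1+h) ^ (-(Y/2)))
      (Ioi (0:ℝ)) := by
  apply (intA hl).mono'
  · apply ContinuousOn.aestronglyMeasurable _ measurableSet_Ioi
    exact (((Real.continuous_exp.comp (by continuity)).continuousOn).mul
      (continuousOn_id.rpow_const (fun x hx => Or.inl (ne_of_gt hx)))).mul
      (((continuous_const.add continuous_id).continuousOn).rpow_const
        (fun x hx => Or.inl (by have : (0:ℝ) < x := hx; show (1:ℝ) + x ≠ 0; positivity)))
  · refine (ae_restrict_iff' measurableSet_Ioi).mpr (ae_of_all _ (fun x hx => ?_))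
    have hx0 : (0:ℝ) < x := hx
    have h1 : (0:ℝ) < 1 + x := by linarith
    rw [Real.norm_eq_abs, abs_of_nonneg (by positivity), mul_assoc, G_id hx0]
    have hr := ratio_le_one hx0 (show (0:ℝ) ≤ Y/2 by linarith)
    have he : (0:ℝ) < Real.exp (-(l*x/2)) := Real.exp_pos _
    exact mul_le_mul_of_nonneg_left
      (mul_le_of_le_one_right (Real.rpow_nonneg hx0.le _) hr) he.le

lemma stepA (hY0 : 0 < Y) {l : ℝ} (hl : 0 < l) :
    (1 - JFun Y l)/Real.sqrt l
      = Real.sqrt ((2*π)⁻¹) * ∫ h in Ioi (0:ℝ), Real.exp (-(l*h/2)) * Gfun Y h := by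
  have hs : ∫ h in Ioi (0:ℝ), Real.exp (-(l*h/2)) * Gfun Y h
      = Real.sqrt (2*π/l)
        - ∫ h in Ioi (0:ℝ), Real.exp (-(l*h/2)) * h ^ ((Y-1)/2) * (1+h) ^ (-(Y/2)) := by
    rw [← L1 hl, ← integral_sub (intA hl) (intB hY0 hl)]
    refine setIntegral_congr_fun measurableSet_Ioi (fun x hx => ?_)
    simp only [Gfun]
    ring
  have key : 1 - JFun Y l
      = Real.sqrt (l/(2*π)) * ∫ h in Ioi (0:ℝ), Real.exp (-(l*h/2)) * Gfun Y h := by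
    rw [hs, mul_sub, JFun]
    congr 1
    rw [← Real.sqrt_mul (by positivity), show l/(2*π) * (2*π/l) = 1 by field_simp]
    exact Real.sqrt_one.symm
  rw [key, show Real.sqrt (l/(2*π)) = Real.sqrt l * Real.sqrt ((2*π)⁻¹) by
    rw [div_eq_mul_inv]; exact Real.sqrt_mul hl.le _]
  have hsl : Real.sqrt l ≠ 0 := by
    rw [Real.sqrt_ne_zero' ]; exact hl
  field_simp



variable {Y : ℝ}

noncomputable def Ffun (Y : ℝ) : ℝ → ℝ :=
  fun h => 2*h^((1:ℝ)/2) - 2*(h^((Y+1)/2) * (1+h)^(-(Y/2)))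

lemma F_id {x : ℝ} (hx : 0 < x) :
    x ^ ((Y+1)/2) * (1+x) ^ (-(Y/2)) = x ^ ((1:ℝ)/2) * (x/(1+x)) ^ (Y/2) := by
  have := ratio_id hx (1/2) (Y/2)
  rwa [show 1/2 + Y/2 = (Y+1)/2 by ring] at this

lemma Ffun_deriv (hY0 : 0 < Y) {x : ℝ} (hx : 0 < x) :
    HasDerivAt (Ffun Y)
      (Gfun Y x - Y * (x ^ ((Y-1)/2) * (1+x) ^ (-(Y/2)-1))) x := by
  have h1 : (0:ℝ) < 1 + x := by linarith
  have d1 : HasDerivAt (fun h:ℝ => h^((1:ℝ)/2)) ((1/2)*x^((1:ℝ)/2-1)) x :=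
    Real.hasDerivAt_rpow_const (Or.inl hx.ne')
  have d2 : HasDerivAt (fun h:ℝ => h^((Y+1)/2)) (((Y+1)/2)*x^((Y+1)/2-1)) x :=
    Real.hasDerivAt_rpow_const (Or.inl hx.ne')
  have d3 : HasDerivAt (fun h:ℝ => (1+h)^(-(Y/2)))
      ((-(Y/2)*(1+x)^(-(Y/2)-1)) * 1) x :=
    (Real.hasDerivAt_rpow_const (p := -(Y/2)) (Or.inl h1.ne')).comp x
      ((hasDerivAt_id x).const_add 1)
  have d4 := (d1.const_mul (2:ℝ)).sub ((d2.mul d3).const_mul (2:ℝ))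
  convert d4 using 1
  · rfl
  · rfl
  · rfl
  have h3 : x^((Y+1)/2) = x^((Y-1)/2)*x := by
    have := Real.rpow_add_one hx.ne' ((Y-1)/2)
    rwa [show (Y-1)/2+1 = (Y+1)/2 by ring] at this
  have h4 : ((1:ℝ)+x)^(-(Y/2)) = (1+x)^(-(Y/2)-1)*(1+x) := by
    have := Real.rpow_add_one h1.ne' (-(Y/2)-1)
    rwa [sub_add_cancel] at this
  simp only [Gfun]
  rw [show (1:ℝ)/2-1 = -(1/2) by norm_num, show (Y+1)/2-1 = (Y-1)/2 by ring, h3, h4]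
  ring

lemma Ffun_cont0 (hY0 : 0 < Y) : ContinuousWithinAt (Ffun Y) (Ici 0) 0 := by
  have c1 : ContinuousAt (fun h:ℝ => h^((1:ℝ)/2)) 0 :=
    Real.continuousAt_rpow_const 0 _ (Or.inr (by norm_num))
  have c2 : ContinuousAt (fun h:ℝ => h^((Y+1)/2)) 0 :=
    Real.continuousAt_rpow_const 0 _ (Or.inr (by linarith))
  have c3 : ContinuousAt (fun h:ℝ => (1+h)^(-(Y/2))) 0 :=
    (Real.continuousAt_rpow_const ((1:ℝ)+0) _ (Or.inl (by norm_num))).comp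
      ((continuous_const.add continuous_id).continuousAt)
  exact ((continuousAt_const.mul c1).sub
    (continuousAt_const.mul (c2.mul c3))).continuousWithinAt

lemma Ffun_lim (hY0 : 0 < Y) (hY2 : Y ≤ 2) : Tendsto (Ffun Y) atTop (𝓝 0) := by
  have hupper : Tendsto (fun x : ℝ => 2 * x ^ (-(1/2) : ℝ)) atTop (𝓝 0) := by
    simpa using (tendsto_rpow_neg_atTop (by norm_num : (0:ℝ) < 1/2)).const_mul (2:ℝ)
  refine tendsto_of_tendsto_of_tendsto_of_le_of_le' tendsto_const_nhds hupper ?_ ?_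
  · filter_upwards [eventually_ge_atTop (1:ℝ)] with x hx1
    have hx0 : (0:ℝ) < x := by linarith
    have ha : (0:ℝ) ≤ x ^ ((1:ℝ)/2) := Real.rpow_nonneg hx0.le _
    have hr : (x/(1+x))^(Y/2) ≤ 1 := ratio_le_one hx0 (by linarith)
    simp only [Ffun]
    rw [F_id hx0]
    nlinarith
  · filter_upwards [eventually_ge_atTop (1:ℝ)] with x hx1
    have hx0 : (0:ℝ) < x := by linarith
    have h1 : (0:ℝ) < 1 + x := by linarith
    have ha : (0:ℝ) ≤ x ^ ((1:ℝ)/2) := Real.rpow_nonneg hx0.le _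
    have hrg : x/(1+x) ≤ (x/(1+x))^(Y/2) := ratio_ge hx0 (by linarith)
    have hinv : (1+x)⁻¹ ≤ x⁻¹ := by
      rw [inv_le_inv₀ h1 hx0]; linarith
    have hdiv : 1 - x/(1+x) = (1+x)⁻¹ := by field_simp; ring
    have key1 : x^((1:ℝ)/2) * (1 - (x/(1+x))^(Y/2)) ≤ x^((1:ℝ)/2) * (1+x)⁻¹ := by
      apply mul_le_mul_of_nonneg_left _ ha
      rw [← hdiv]; linarith
    have key2 : x^((1:ℝ)/2) * (1+x)⁻¹ ≤ x^((1:ℝ)/2) * x⁻¹ :=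
      mul_le_mul_of_nonneg_left hinv ha
    have e : x^(-(1/2):ℝ) = x^((1:ℝ)/2) * x⁻¹ := by
      rw [show (-(1/2):ℝ) = 1/2 + (-1) by norm_num, Real.rpow_add hx0, Real.rpow_neg_one]
    simp only [Ffun]
    rw [F_id hx0, e]
    nlinarith




variable {Y : ℝ}

lemma intG_val (hY0 : 0 < Y) (hY2 : Y ≤ 2) :
    ∫ x in Ioi (0:ℝ), Gfun Y x
      = Y * (Real.Gamma ((Y+1)/2) * Real.Gamma (1/2) / Real.Gamma (Y/2 + 1)) := by
  have hbet := intBet hY0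
  have hint : IntegrableOn
      (fun x : ℝ => Gfun Y x - Y * (x ^ ((Y-1)/2) * (1+x) ^ (-(Y/2)-1))) (Ioi (0:ℝ)) :=
    (intG hY0 hY2).sub (hbet.const_mul Y)
  have hF0 : Ffun Y 0 = 0 := by
    simp only [Ffun]
    rw [Real.zero_rpow (by norm_num), Real.zero_rpow (by positivity : ((Y+1)/2) ≠ 0)]
    ring
  have hftc := integral_Ioi_of_hasDerivAt_of_tendsto (Ffun_cont0 hY0)
    (fun x hx => Ffun_deriv hY0 (mem_Ioi.mp hx)) hint (Ffun_lim hY0 hY2)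
  rw [hF0, sub_zero] at hftc
  have hsub : ∫ x in Ioi (0:ℝ), (Gfun Y x - Y * (x ^ ((Y-1)/2) * (1+x) ^ (-(Y/2)-1)))
      = (∫ x in Ioi (0:ℝ), Gfun Y x)
        - Y * ∫ x in Ioi (0:ℝ), x ^ ((Y-1)/2) * (1+x) ^ (-(Y/2)-1) := by
    rw [integral_sub (intG hY0 hY2) (hbet.const_mul Y), MeasureTheory.integral_const_mul]
  rw [hsub] at hftc
  have hbval : ∫ x in Ioi (0:ℝ), x ^ ((Y-1)/2) * (1+x) ^ (-(Y/2)-1)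
      = Real.Gamma ((Y+1)/2) * Real.Gamma (1/2) / Real.Gamma (Y/2 + 1) := by
    have := beta_Ioi ((Y+1)/2) (1/2) (by linarith) (by norm_num)
    rw [show (Y+1)/2 - 1 = (Y-1)/2 by ring, show -((Y+1)/2 + 1/2) = -(Y/2)-1 by ring,
      show (Y+1)/2 + 1/2 = Y/2 + 1 by ring] at this
    exact this
  rw [hbval] at hftc
  linarith

lemma hDCT (hY0 : 0 < Y) (hY2 : Y ≤ 2) :
    Tendsto (fun l : ℝ => ∫ h in Ioi (0:ℝ), Real.exp (-(l*h/2)) * Gfun Y h)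
      (𝓝[>] 0) (𝓝 (∫ h in Ioi (0:ℝ), Gfun Y h)) := by
  apply tendsto_integral_filter_of_dominated_convergence (Gfun Y)
  · apply Eventually.of_forall
    intro l
    exact ((((Real.continuous_exp.comp (by continuity)).continuousOn).mul contG)).aestronglyMeasurable
      measurableSet_Ioi
  · filter_upwards [self_mem_nhdsWithin] with l hl
    refine (ae_restrict_iff' measurableSet_Ioi).mpr (ae_of_all _ (fun x hx => ?_))
    have hx0 : (0:ℝ) < x := hx
    have hl0 : (0:ℝ) < l := hl
    rw [Real.norm_eq_abs,
      abs_of_nonneg (mul_nonneg (Real.exp_pos _).le (G_nonneg hY0 hx0))]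
    apply mul_le_of_le_one_left (G_nonneg hY0 hx0)
    rw [Real.exp_le_one_iff]
    nlinarith
  · exact intG hY0 hY2
  · refine (ae_restrict_iff' measurableSet_Ioi).mpr (ae_of_all _ (fun x hx => ?_))
    have hc : Continuous fun l : ℝ => Real.exp (-(l*x/2)) * Gfun Y x := by
      continuity
    have h0 : Tendsto (fun l : ℝ => Real.exp (-(l*x/2)) * Gfun Y x) (𝓝[>] (0:ℝ))
        (𝓝 (Real.exp (-((0:ℝ)*x/2)) * Gfun Y x)) :=
      (hc.tendsto 0).mono_left nhdsWithin_le_nhds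
    simpa using h0

/-- The order of convergence of `1 - J_Y(λ)` to zero is exactly `√λ`:
`(1 - J_Y(λ))/√λ → √2 · Γ((Y+1)/2)/Γ(Y/2)` as `λ → 0⁻`. -/
theorem one_sub_JFun_order (Y : ℝ) (hY0 : 0 < Y) (hY2 : Y < 2) :
    Tendsto (fun l => (1 - JFun Y l) / Real.sqrt l) (nhdsWithin 0 (Ioi 0))
      (nhds (Real.sqrt 2 * Real.Gamma ((Y+1)/2) / Real.Gamma (Y/2))) := by
  have hY2' : Y ≤ 2 := hY2.le
  have hmain : Tendsto (fun l : ℝ =>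
      Real.sqrt ((2*π)⁻¹) * ∫ h in Ioi (0:ℝ), Real.exp (-(l*h/2)) * Gfun Y h)
      (𝓝[>] 0) (𝓝 (Real.sqrt ((2*π)⁻¹) * ∫ h in Ioi (0:ℝ), Gfun Y h)) :=
    (hDCT hY0 hY2').const_mul _
  have hval : Real.sqrt ((2*π)⁻¹) * ∫ h in Ioi (0:ℝ), Gfun Y h
      = Real.sqrt 2 * Real.Gamma ((Y+1)/2) / Real.Gamma (Y/2) := by
    rw [intG_val hY0 hY2', Real.Gamma_one_half_eq,
      Real.Gamma_add_one (by positivity : (Y/2) ≠ 0)]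
    have hs : Real.sqrt ((2*π)⁻¹) * Real.sqrt π = (Real.sqrt 2)⁻¹ := by
      rw [← Real.sqrt_mul (by positivity), show ((2*π)⁻¹ * π : ℝ) = 2⁻¹ by
        field_simp [mul_comm], Real.sqrt_inv]
    have h2 : Real.sqrt 2 * Real.sqrt 2 = 2 := Real.mul_self_sqrt (by norm_num)
    have hΓ : Real.Gamma (Y/2) ≠ 0 := (Real.Gamma_pos_of_pos (by linarith)).ne'
    have hsqrt2 : Real.sqrt 2 ≠ 0 := by positivity
    field_simp [hΓ]
    rw [mul_assoc, one_div, hs, ← div_eq_mul_inv, div_eq_iff hsqrt2, h2]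
  rw [← hval] at *
  apply hmain.congr'
  filter_upwards [self_mem_nhdsWithin] with l hl
  exact (stepA hY0 hl).symm
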